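/- In the λJ-calculus: if a ⤳ a' and b ⤳ b', then a[x:=b] ⤳* a'[x:=b']. -/

import Mathlib

/-! ## The λJ-calculus: the untyped λ-calculus extended with a constant `J` and a
distinguished (never bound) variable `ν`, in de Bruijn representation. -/

/-- Terms of the λJ-calculus. -/
inductive JTm : Type where
  | var : ℕ → JTm
  | jc : JTm            -- the constant `J`
  | nu : JTm            -- the distinguished variable `ν`
  | app : JTm → JTm → JTm
  | abs : JTm → JTm
  deriving DecidableEq

namespace JTm

/-- Lifting of de Bruijn indices (cutoff `d`). -/
def lift (d : ℕ) : JTm → JTm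
  | var n => if n < d then var n else var (n + 1)
  | jc => jc
  | nu => nu
  | app a b => app (lift d a) (lift d b)
  | abs a => abs (lift (d + 1) a)

/-- Capture-avoiding substitution of `u` for the variable `k`. -/
def subst : JTm → ℕ → JTm → JTm
  | var n, k, u => if n = k then u else if k < n then var (n - 1) else var n
  | jc, _, _ => jc
  | nu, _, _ => nu
  | app a b, k, u => app (subst a k u) (subst b k u)
  | abs a, k, u => abs (subst a (k + 1) (lift 0 u))

/-- `n`-fold lifting. -/
def liftN (n : ℕ) (t : JTm) : JTm := (lift 0)^[n] t

/-- `n`-fold abstraction `λy₁…λyₙ.t`. -/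
def absN : ℕ → JTm → JTm
  | 0, t => t
  | n + 1, t => abs (absN n t)

/-- Application of a head to a list of arguments. -/
def mkApps (h : JTm) (as : List JTm) : JTm := as.foldl app h

/-- The right-hand side `λy₁…λy_p.(u (J ν y₁) … (J ν y_p))` of the `J`-rule. -/
def jRhs (p : ℕ) (u : JTm) : JTm :=
  absN p (mkApps (liftN p u) ((List.range p).reverse.map fun i => app (app jc nu) (var i)))

/-- One-step reduction `▷` of the λJ-calculus: β-reduction together with the rule
`(J ν u) ▷ λy₁…λy_p.(u (J ν y₁) … (J ν y_p))`. -/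
inductive Step (p : ℕ) : JTm → JTm → Prop
  | beta (a b : JTm) : Step p (app (abs a) b) (subst a 0 b)
  | jrule (u : JTm) : Step p (app (app jc nu) u) (jRhs p u)
  | appL {a a' : JTm} (b : JTm) : Step p a a' → Step p (app a b) (app a' b)
  | appR (a : JTm) {b b' : JTm} : Step p b b' → Step p (app a b) (app a b')
  | abs {a a' : JTm} : Step p a a' → Step p (JTm.abs a) (JTm.abs a')

/-- `▷*`. -/
def Steps (p : ℕ) : JTm → JTm → Prop := Relation.ReflTransGen (Step p)

/-- `EJ p u e` : `e ∈ E_u`, the least set of terms containing `u` and closed under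
`e ↦ (J ν e)` and `e ↦ λy⃗.(e e⃗_y)`, where `y⃗` is a sequence of (fresh) variables and
each component of `e⃗_y` lies in `E_y` for the corresponding variable `y` of `y⃗`
(in de Bruijn style, `λy⃗` of length `n` binds the indices `n-1, …, 0` and `e` is
lifted accordingly). -/
inductive EJ (p : ℕ) : JTm → JTm → Prop
  | base (u : JTm) : EJ p u u
  | jnu {u e : JTm} : EJ p u e → EJ p u (app (app jc nu) e)
  | lamApp {u e : JTm} (n : ℕ) (as : List JTm) :
      EJ p u e →
      List.Forall₂ (fun i a => EJ p (var i) a) (List.range n).reverse as →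
      EJ p u (absN n (mkApps (liftN n e) as))

/-- `t ⤳ t'` : `t = C[u]` and `t' = C[u']` for a one-hole context `C` and `u' ∈ E_u`. -/
inductive Leads (p : ℕ) : JTm → JTm → Prop
  | base {u u' : JTm} : EJ p u u' → Leads p u u'
  | appL {a a' : JTm} (b : JTm) : Leads p a a' → Leads p (app a b) (app a' b)
  | appR (a : JTm) {b b' : JTm} : Leads p b b' → Leads p (app a b) (app a b')
  | abs {a a' : JTm} : Leads p a a' → Leads p (JTm.abs a) (JTm.abs a')

/-- `⤳*`. -/
def LeadsStar (p : ℕ) : JTm → JTm → Prop := Relation.ReflTransGen (Leads p)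

/-- A variable applied to a (possibly empty) list of arguments. -/
inductive HeadVarApp : JTm → Prop
  | var (n : ℕ) : HeadVarApp (var n)
  | app {a : JTm} (b : JTm) : HeadVarApp a → HeadVarApp (app a b)

/-- Head normal forms `λx₁…λxₙ.(y t₁ … tₘ)`. -/
inductive IsHNF : JTm → Prop
  | head {t : JTm} : HeadVarApp t → IsHNF t
  | abs {a : JTm} : IsHNF a → IsHNF (JTm.abs a)

/-- Solvability in the λJ-calculus. -/
def Solvable (p : ℕ) (t : JTm) : Prop := ∃ h, Steps p t h ∧ IsHNF h

/-- `ν` occurs nicely in `t` : every occurrence of `ν` is inside a subterm `(J ν)`. -/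
def Nice : JTm → Prop
  | app jc nu => True
  | app a b => Nice a ∧ Nice b
  | abs a => Nice a
  | nu => False
  | _ => True

/-- `ν` occurs in `t`. -/
def HasNu : JTm → Prop
  | nu => True
  | app a b => HasNu a ∨ HasNu b
  | abs a => HasNu a
  | _ => False

/-- `ν` occurs correctly in `t` : `ν` occurs nicely in `t` and `t` has a head normal
form of the shape `λx⃗.(x c⃗ e⃗_y)` where `y⃗` is a final subsequence of `x⃗` of length
`k ≥ 1` (the `k` innermost binders, i.e. the de Bruijn indices `k-1, …, 0`), each
component of `e⃗_y` is in `E_y`, and `ν` occurs in `e⃗_y`. -/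
def Correct (p : ℕ) (t : JTm) : Prop :=
  Nice t ∧ ∃ (n m k : ℕ) (cs es : List JTm),
    1 ≤ k ∧ es.length = k ∧ k ≤ n ∧
    Steps p t (absN n (mkApps (var m) (cs ++ es))) ∧
    List.Forall₂ (fun i e => EJ p (var i) e) (List.range k).reverse es ∧
    ∃ e ∈ es, HasNu e

/-- `t` contains no subterm of the form `(ν u)`. -/
def NoNuApp : JTm → Prop
  | app a b => a ≠ nu ∧ NoNuApp a ∧ NoNuApp b
  | abs a => NoNuApp a
  | _ => True

end JTm

namespace JTm

/-! ### Basic lifting/substitution lemmas -/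

theorem lift_lift (t : JTm) : ∀ i j, i ≤ j →
    lift i (lift j t) = lift (j + 1) (lift i t) := by
  induction t with
  | var n =>
      intro i j hij
      simp only [lift]
      split_ifs <;> simp only [lift] <;> split_ifs <;>
        first | rfl | (simp only [JTm.var.injEq]; omega) | (exfalso; omega)
  | jc => intros; rfl
  | nu => intros; rfl
  | app a b iha ihb => intro i j hij; simp [lift, iha i j hij, ihb i j hij]
  | abs a iha =>
      intro i j hij
      simp only [lift]
      rw [iha (i+1) (j+1) (by omega)]

theorem subst_lift (t : JTm) : ∀ d k (u : JTm), d ≤ k →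
    subst (lift d t) (k + 1) (lift d u) = lift d (subst t k u) := by
  induction t with
  | var n =>
      intro d k u hdk
      simp only [lift, subst]
      split_ifs <;> simp only [lift, subst] <;> split_ifs <;>
        first | rfl | (simp only [JTm.var.injEq]; omega) | (exfalso; omega)
  | jc => intros; rfl
  | nu => intros; rfl
  | app a b iha ihb =>
      intro d k u hdk; simp [lift, subst, iha d k u hdk, ihb d k u hdk]
  | abs a iha =>
      intro d k u hdk
      simp only [lift, subst]
      rw [lift_lift u 0 d (Nat.zero_le d), iha (d+1) (k+1) (lift 0 u) (by omega)]

theorem liftN_succ (n : ℕ) (t : JTm) : liftN (n + 1) t = lift 0 (liftN n t) :=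
  Function.iterate_succ_apply' _ _ _

theorem liftN_succ' (n : ℕ) (t : JTm) : liftN (n + 1) t = liftN n (lift 0 t) :=
  Function.iterate_succ_apply _ _ _

theorem subst_liftN (n : ℕ) (t : JTm) (k : ℕ) (u : JTm) :
    subst (liftN n t) (k + n) (liftN n u) = liftN n (subst t k u) := by
  induction n with
  | zero => rfl
  | succ n ih =>
      rw [liftN_succ, liftN_succ, liftN_succ, show k + (n+1) = (k + n) + 1 by omega,
        subst_lift _ 0 (k+n) _ (Nat.zero_le _), ih]

theorem lift_liftN (n : ℕ) (t : JTm) (d : ℕ) :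
    lift (d + n) (liftN n t) = liftN n (lift d t) := by
  induction n with
  | zero => rfl
  | succ n ih =>
      rw [liftN_succ, liftN_succ, show d + (n+1) = (d + n) + 1 by omega,
        ← lift_lift _ 0 (d+n) (Nat.zero_le _), ih]

theorem subst_absN (n : ℕ) (t : JTm) (k : ℕ) (u : JTm) :
    subst (absN n t) k u = absN n (subst t (k + n) (liftN n u)) := by
  induction n generalizing k u with
  | zero => rfl
  | succ n ih =>
      show JTm.abs (subst (absN n t) (k+1) (lift 0 u))
          = JTm.abs (absN n (subst t (k + (n+1)) (liftN (n+1) u)))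
      rw [ih (k+1) (lift 0 u), ← liftN_succ', show k+1+n = k+(n+1) by omega]

theorem lift_absN (n : ℕ) (t : JTm) (d : ℕ) :
    lift d (absN n t) = absN n (lift (d + n) t) := by
  induction n generalizing d with
  | zero => rfl
  | succ n ih =>
      show JTm.abs (lift (d+1) (absN n t)) = JTm.abs (absN n (lift (d + (n+1)) t))
      rw [ih (d+1), show d+1+n = d+(n+1) by omega]

theorem subst_mkApps (h : JTm) (as : List JTm) (k : ℕ) (u : JTm) :
    subst (mkApps h as) k u = mkApps (subst h k u) (as.map (fun a => subst a k u)) := by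
  induction as generalizing h with
  | nil => rfl
  | cons a as ih => exact ih (app h a)

theorem lift_mkApps (h : JTm) (as : List JTm) (d : ℕ) :
    lift d (mkApps h as) = mkApps (lift d h) (as.map (lift d)) := by
  induction as generalizing h with
  | nil => rfl
  | cons a as ih => exact ih (app h a)

/-! ### Free-variable bounds -/

/-- All free de Bruijn indices of `t` are `< m`. -/
def FVBound (m : ℕ) : JTm → Prop
  | var n => n < m
  | jc => True
  | nu => True
  | app a b => FVBound m a ∧ FVBound m b
  | abs a => FVBound (m + 1) a

theorem fvb_mono {m m' : ℕ} (h : m ≤ m') : ∀ {t : JTm}, FVBound m t → FVBound m' t := by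
  intro t
  induction t generalizing m m' with
  | var n => intro ht; exact lt_of_lt_of_le ht h
  | jc => intro _; trivial
  | nu => intro _; trivial
  | app a b iha ihb =>
      intro ht
      have ht' : FVBound m a ∧ FVBound m b := ht
      exact ⟨iha h ht'.1, ihb h ht'.2⟩
  | abs a iha =>
      intro ht
      have ht' : FVBound (m+1) a := ht
      show FVBound (m'+1) a
      exact iha (Nat.succ_le_succ h) ht'
  
theorem fvb_lift {m : ℕ} {t : JTm} (h : FVBound m t) (d : ℕ) :
    FVBound (m + 1) (lift d t) := by
  induction t generalizing m d with
  | var n =>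
      have h' : n < m := h
      simp only [lift]
      split
      · exact lt_of_lt_of_le h' (Nat.le_succ m)
      · exact Nat.succ_lt_succ h'
  | jc => trivial
  | nu => trivial
  | app a b iha ihb =>
      have h' : FVBound m a ∧ FVBound m b := h
      exact ⟨iha h'.1 d, ihb h'.2 d⟩
  | abs a iha =>
      have h' : FVBound (m+1) a := h
      show FVBound (m+1+1) (lift (d+1) a)
      exact iha h' (d+1)

theorem fvb_liftN {m : ℕ} {t : JTm} (h : FVBound m t) (n : ℕ) :
    FVBound (m + n) (liftN n t) := by
  induction n with
  | zero => exact h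
  | succ n ih => rw [liftN_succ]; exact fvb_lift ih 0

theorem lift_eq_of_fvb {m : ℕ} {t : JTm} (h : FVBound m t) {d : ℕ} (hd : m ≤ d) :
    lift d t = t := by
  induction t generalizing m d with
  | var n =>
      have h' : n < m := h
      simp only [lift]; rw [if_pos (lt_of_lt_of_le h' hd)]
  | jc => rfl
  | nu => rfl
  | app a b iha ihb =>
      have h' : FVBound m a ∧ FVBound m b := h
      simp only [lift]; rw [iha h'.1 hd, ihb h'.2 hd]
  | abs a iha =>
      have h' : FVBound (m+1) a := h
      simp only [lift]; rw [iha h' (Nat.succ_le_succ hd)]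

theorem subst_eq_of_fvb {m : ℕ} {t : JTm} (h : FVBound m t) {k : ℕ} (hk : m ≤ k)
    (u : JTm) : subst t k u = t := by
  induction t generalizing m k u with
  | var n =>
      have h' : n < m := h
      simp only [subst]
      rw [if_neg (by omega), if_neg (by omega)]
  | jc => rfl
  | nu => rfl
  | app a b iha ihb =>
      have h' : FVBound m a ∧ FVBound m b := h
      simp only [subst]; rw [iha h'.1 hk, ihb h'.2 hk]
  | abs a iha =>
      have h' : FVBound (m+1) a := h
      simp only [subst]; rw [iha h' (Nat.succ_le_succ hk)]

theorem fvb_absN {m n : ℕ} {t : JTm} (h : FVBound (m + n) t) : FVBound m (absN n t) := by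
  induction n generalizing m with
  | zero => exact h
  | succ n ih =>
      show FVBound (m+1) (absN n t)
      exact ih (by rw [show m + 1 + n = m + (n+1) by omega]; exact h)

theorem fvb_mkApps {m : ℕ} {h : JTm} {as : List JTm} (hh : FVBound m h)
    (has : ∀ a ∈ as, FVBound m a) : FVBound m (mkApps h as) := by
  induction as generalizing h with
  | nil => exact hh
  | cons a as ih =>
      exact ih (h := app h a) ⟨hh, has a (List.mem_cons_self)⟩
        (fun b hb => has b (List.mem_cons_of_mem _ hb))

theorem forall₂_mem_right {α β : Type*} {R : α → β → Prop} :
    ∀ {l₁ : List α} {l₂ : List β}, List.Forall₂ R l₁ l₂ → ∀ b ∈ l₂, ∃ a ∈ l₁, R a b := by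
  intro l₁ l₂ h
  induction h with
  | nil => intro b hb; exact absurd hb List.not_mem_nil
  | cons h1 h2 ih =>
      intro b hb
      rcases List.mem_cons.1 hb with rfl | hb
      · exact ⟨_, List.mem_cons_self, h1⟩
      · rcases ih b hb with ⟨a, ha, hr⟩
        exact ⟨a, List.mem_cons_of_mem _ ha, hr⟩

theorem EJ_var_fvb' {p : ℕ} : ∀ {u a : JTm}, EJ p u a → ∀ i, u = var i → FVBound (i + 1) a := by
  refine EJ.rec (motive_1 := fun u e _ => ∀ i, u = var i → FVBound (i+1) e)
    (motive_2 := fun l₁ l₂ _ => List.Forall₂ (fun j a => FVBound (j+1) a) l₁ l₂)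
    ?_ ?_ ?_ ?_ ?_
  · intro u i hi; subst hi; exact Nat.lt_succ_self i
  · intro u e _ ih i hi; exact ⟨⟨trivial, trivial⟩, ih i hi⟩
  · intro u e n as _ _ ih ihf i hi
    refine fvb_absN (fvb_mkApps (fvb_liftN (ih i hi) n) ?_)
    intro a ha
    rcases forall₂_mem_right ihf a ha with ⟨j, hj, hja⟩
    have hjn : j < n := List.mem_range.1 (List.mem_reverse.1 hj)
    exact fvb_mono (by omega) hja
  · exact List.Forall₂.nil
  · intro j b l₁ l₂ h1 _ ih1 ih2
    exact List.Forall₂.cons (ih1 j rfl) ih2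

theorem EJ_var_fvb {p i : ℕ} {a : JTm} (h : EJ p (var i) a) : FVBound (i + 1) a :=
  EJ_var_fvb' h i rfl

theorem map_id_of {f : JTm → JTm} : ∀ {l : List JTm}, (∀ a ∈ l, f a = a) → l.map f = l := by
  intro l
  induction l with
  | nil => intro _; rfl
  | cons a l ih =>
      intro h
      simp only [List.map]
      rw [h a (List.mem_cons_self), ih (fun b hb => h b (List.mem_cons_of_mem _ hb))]

/-! ### Stability of `EJ` and `Leads` under lifting and substitution -/

theorem EJ_lift {p : ℕ} : ∀ {u e : JTm}, EJ p u e → ∀ d, EJ p (lift d u) (lift d e) := by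
  refine EJ.rec (motive_1 := fun u e _ => ∀ d, EJ p (lift d u) (lift d e))
    (motive_2 := fun _ _ _ => True) ?_ ?_ ?_ trivial (fun _ _ _ _ => trivial)
  · intro u d; exact EJ.base _
  · intro u e _ ih d; exact EJ.jnu (ih d)
  · intro u e n as _ hf ih _ d
    have hmap : as.map (lift (d + n)) = as := by
      refine map_id_of ?_
      intro a ha
      rcases forall₂_mem_right hf a ha with ⟨j, hj, hja⟩
      have hjn : j < n := List.mem_range.1 (List.mem_reverse.1 hj)
      exact lift_eq_of_fvb (EJ_var_fvb hja) (by omega)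
    rw [lift_absN, lift_mkApps, lift_liftN, hmap]
    exact EJ.lamApp n as (ih d) hf

theorem EJ_subst {p : ℕ} : ∀ {u e : JTm}, EJ p u e →
    ∀ k (b : JTm), EJ p (subst u k b) (subst e k b) := by
  refine EJ.rec (motive_1 := fun u e _ => ∀ k b, EJ p (subst u k b) (subst e k b))
    (motive_2 := fun _ _ _ => True) ?_ ?_ ?_ trivial (fun _ _ _ _ => trivial)
  · intro u k b; exact EJ.base _
  · intro u e _ ih k b; exact EJ.jnu (ih k b)
  · intro u e n as _ hf ih _ k b
    have hmap : as.map (fun a => subst a (k + n) (liftN n b)) = as := by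
      refine map_id_of ?_
      intro a ha
      rcases forall₂_mem_right hf a ha with ⟨j, hj, hja⟩
      have hjn : j < n := List.mem_range.1 (List.mem_reverse.1 hj)
      exact subst_eq_of_fvb (EJ_var_fvb hja) (by omega) _
    rw [subst_absN, subst_mkApps, subst_liftN, hmap]
    exact EJ.lamApp n as (ih k b) hf

theorem Leads_lift {p : ℕ} {b b' : JTm} (h : Leads p b b') :
    ∀ d, Leads p (lift d b) (lift d b') := by
  induction h with
  | base he => intro d; exact Leads.base (EJ_lift he d)
  | appL c _ ih => intro d; exact Leads.appL _ (ih d)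
  | appR c _ ih => intro d; exact Leads.appR _ (ih d)
  | abs _ ih => intro d; exact Leads.abs (ih (d+1))

theorem Leads_subst_left {p : ℕ} {a a' : JTm} (h : Leads p a a') :
    ∀ k (b : JTm), Leads p (subst a k b) (subst a' k b) := by
  induction h with
  | base he => intro k b; exact Leads.base (EJ_subst he k b)
  | appL c _ ih => intro k b; exact Leads.appL _ (ih k b)
  | appR c _ ih => intro k b; exact Leads.appR _ (ih k b)
  | abs _ ih => intro k b; exact Leads.abs (ih (k+1) (lift 0 b))

theorem leadsStar_appL {p : ℕ} {a a' : JTm} (b : JTm) (h : LeadsStar p a a') :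
    LeadsStar p (app a b) (app a' b) := by
  induction h with
  | refl => exact Relation.ReflTransGen.refl
  | tail _ h ih => exact ih.tail (Leads.appL b h)

theorem leadsStar_appR {p : ℕ} (a : JTm) {b b' : JTm} (h : LeadsStar p b b') :
    LeadsStar p (app a b) (app a b') := by
  induction h with
  | refl => exact Relation.ReflTransGen.refl
  | tail _ h ih => exact ih.tail (Leads.appR a h)

theorem leadsStar_abs {p : ℕ} {a a' : JTm} (h : LeadsStar p a a') :
    LeadsStar p (JTm.abs a) (JTm.abs a') := by
  induction h with
  | refl => exact Relation.ReflTransGen.refl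
  | tail _ h ih => exact ih.tail (Leads.abs h)

theorem leadsStar_subst_right {p : ℕ} (t : JTm) :
    ∀ (k : ℕ) {b b' : JTm}, Leads p b b' → LeadsStar p (subst t k b) (subst t k b') := by
  induction t with
  | var n =>
      intro k b b' h
      simp only [subst]
      split_ifs
      · exact Relation.ReflTransGen.single h
      · exact Relation.ReflTransGen.refl
      · exact Relation.ReflTransGen.refl
  | jc => intro _ _ _ _; exact Relation.ReflTransGen.refl
  | nu => intro _ _ _ _; exact Relation.ReflTransGen.refl
  | app a c iha ihc =>
      intro k b b' h
      exact (leadsStar_appL _ (iha k h)).trans (leadsStar_appR _ (ihc k h))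
  | abs a iha =>
      intro k b b' h
      exact leadsStar_abs (iha (k+1) (Leads_lift h 0))

end JTm

open JTm in
/-- in the λJ-calculus, if `a ⤳ a'` and `b ⤳ b'`, then
`a[x:=b] ⤳* a'[x:=b']`. -/
theorem leads_subst (p : ℕ) (hp : 1 ≤ p) (a a' b b' : JTm) (x : ℕ)
    (ha : Leads p a a') (hb : Leads p b b') :
    LeadsStar p (subst a x b) (subst a' x b') :=
  (Relation.ReflTransGen.single (Leads_subst_left ha x b)).trans
    (leadsStar_subst_right a' x hb)
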